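/- Let R be a commutative ring with identity, S a multiplicatively closed subset of R, M an R-module, and N a submodule of M. If M is a fully S-idempotent R-module, then M/N is a fully S-idempotent R-module. Conversely, if M/N is a fully S-idempotent R-module and there exists t ∈ S with tN = 0, then M is a fully S-idempotent R-module. -/

import Mathlib

open Pointwise
/-- A submodule `N` of `M` is `S`-idempotent if there is `s ∈ S` with
`s • N ⊆ (N :_R M)² M ⊆ N`. -/
def Submodule.SIdempotent {R M : Type*} [CommRing R] [AddCommGroup M] [Module R M]
    (S : Submonoid R) (N : Submodule R M) : Prop :=
  ∃ s ∈ S, s • N ≤ (N.colon ⊤) ^ 2 • (⊤ : Submodule R M) ∧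
    (N.colon ⊤) ^ 2 • (⊤ : Submodule R M) ≤ N

/-- `M` is fully `S`-idempotent if every submodule is `S`-idempotent. -/
def Module.FullySIdempotent (R M : Type*) [CommRing R] [AddCommGroup M] [Module R M]
    (S : Submonoid R) : Prop :=
  ∀ N : Submodule R M, N.SIdempotent S

lemma aux_colon_sq_le {R M : Type*} [CommRing R] [AddCommGroup M] [Module R M]
    (P : Submodule R M) : (P.colon ⊤) ^ 2 • (⊤ : Submodule R M) ≤ P := by
  refine le_trans (Submodule.smul_mono_left (Ideal.pow_le_self two_ne_zero)) ?_
  refine Submodule.smul_le.2 fun r hr m _ => ?_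
  exact Submodule.mem_colon.mp hr m trivial

/-- If `M` is fully `S`-idempotent then so is `M/N`; conversely, if `M/N` is fully
`S`-idempotent and `t • N = 0` for some `t ∈ S`, then `M` is fully `S`-idempotent. -/
theorem fullySIdempotent_quotient
    {R M : Type*} [CommRing R] [AddCommGroup M] [Module R M] (S : Submonoid R)
    (N : Submodule R M) :
    (Module.FullySIdempotent R M S → Module.FullySIdempotent R (M ⧸ N) S) ∧
      (Module.FullySIdempotent R (M ⧸ N) S →
        (∃ t ∈ S, ∀ x ∈ N, t • x = 0) →
        Module.FullySIdempotent R M S) := by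
  constructor
  · intro hM Kb
    set K : Submodule R M := Kb.comap N.mkQ with hK
    obtain ⟨s, hs, h1, -⟩ := hM K
    have hcol : Kb.colon ⊤ = K.colon ⊤ := by
      ext r
      simp only [Submodule.mem_colon, Submodule.mem_top, forall_true_left]
      constructor
      · intro h m
        have := h (N.mkQ m)
        simpa [hK, Submodule.mem_comap] using this
      · intro h x
        obtain ⟨m, rfl⟩ := N.mkQ_surjective x
        have := h m
        rw [hK, Submodule.mem_comap] at this
        simpa using this
    refine ⟨s, hs, ?_, aux_colon_sq_le Kb⟩
    intro x hx
    rw [← SetLike.mem_coe, Submodule.coe_pointwise_smul] at hx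
    obtain ⟨y, hy, rfl⟩ := hx
    obtain ⟨m, rfl⟩ := N.mkQ_surjective y
    have hmK : m ∈ K := by rwa [hK, Submodule.mem_comap]
    have hsm : s • m ∈ (K.colon ⊤) ^ 2 • (⊤ : Submodule R M) :=
      h1 (Submodule.smul_mem_pointwise_smul m s K hmK)
    have : N.mkQ (s • m) ∈ ((K.colon ⊤) ^ 2 • (⊤ : Submodule R M)).map N.mkQ :=
      Submodule.mem_map_of_mem hsm
    rw [Submodule.map_smul'', Submodule.map_top, Submodule.range_mkQ] at this
    rw [hcol]
    simpa using this
  · intro hQ ⟨t, ht, htN⟩ K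
    obtain ⟨s, hs, h1, -⟩ := hQ (K.map N.mkQ)
    set Kb := K.map N.mkQ with hKb
    set I := Kb.colon (⊤ : Submodule R (M ⧸ N)) with hI
    set J := K.colon (⊤ : Submodule R M) with hJ
    have htI : ∀ r ∈ I, t * r ∈ J := by
      intro r hr
      rw [hJ, Submodule.mem_colon]
      intro m _
      have : r • N.mkQ m ∈ Kb := Submodule.mem_colon.mp hr (N.mkQ m) trivial
      rw [← map_smul, hKb] at this
      obtain ⟨k, hk, hkeq⟩ := Submodule.mem_map.mp this
      have hn : r • m - k ∈ N := by
        have h0 : N.mkQ (r • m - k) = 0 := by rw [map_sub, hkeq, sub_self]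
        rwa [Submodule.mkQ_apply, Submodule.Quotient.mk_eq_zero] at h0
      have : (t * r) • m = t • k + t • (r • m - k) := by
        rw [smul_sub, mul_smul]; abel
      rw [this, htN _ hn, add_zero]
      exact K.smul_mem t hk
    have htI2 : ∀ a ∈ I ^ 2, t * t * a ∈ J ^ 2 := by
      intro a ha
      rw [pow_two] at ha ⊢
      refine Submodule.mul_induction_on ha ?_ ?_
      · intro x hx y hy
        have : t * t * (x * y) = (t * x) * (t * y) := by ring
        rw [this]
        exact Ideal.mul_mem_mul (htI x hx) (htI y hy)
      · intro x y hx hy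
        have : t * t * (x + y) = t * t * x + t * t * y := by ring
        rw [this]
        exact Ideal.add_mem _ hx hy
    refine ⟨t * t * s, S.mul_mem (S.mul_mem ht ht) hs, ?_, aux_colon_sq_le K⟩
    intro x hx
    rw [← SetLike.mem_coe, Submodule.coe_pointwise_smul] at hx
    obtain ⟨y, hy, rfl⟩ := hx
    have hsy : s • N.mkQ y ∈ I ^ 2 • (⊤ : Submodule R (M ⧸ N)) :=
      h1 (Submodule.smul_mem_pointwise_smul _ s _ (Submodule.mem_map_of_mem hy))
    rw [show (⊤ : Submodule R (M ⧸ N)) = (⊤ : Submodule R M).map N.mkQ by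
      rw [Submodule.map_top, Submodule.range_mkQ], ← Submodule.map_smul''] at hsy
    obtain ⟨z, hz, hzeq⟩ := Submodule.mem_map.mp hsy
    have hn : s • y - z ∈ N := by
      have h0 : N.mkQ (s • y - z) = 0 := by rw [map_sub, map_smul, ← hzeq, sub_self]
      rwa [Submodule.mkQ_apply, Submodule.Quotient.mk_eq_zero] at h0
    have key : (t * t * s) • y = (t * t) • z + (t * t) • (s • y - z) := by
      rw [mul_smul, smul_sub]; abel
    have hz2 : (t * t) • z ∈ J ^ 2 • (⊤ : Submodule R M) := by
      refine Submodule.smul_induction_on hz ?_ ?_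
      · intro a ha m _
        rw [smul_smul]
        exact Submodule.smul_mem_smul (htI2 a ha) trivial
      · intro u v hu hv
        rw [smul_add]
        exact Submodule.add_mem _ hu hv
    have hzero : (t * t) • (s • y - z) = 0 := by
      rw [mul_smul, htN _ hn, smul_zero]
    show (t * t * s) • y ∈ J ^ 2 • (⊤ : Submodule R M)
    rw [key, hzero, add_zero]
    exact hz2
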